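/- Let ν ∈ S¹∩ℚ² be a rational direction, θ < λ, and k ∈ ℤ². If ⟨k,ν⟩ ≤ 0 then τ_k u_{1,ν}^{θ,λ} ≤ u_{1,ν}^{θ,λ} pointwise, and if ⟨k,ν⟩ ≥ 0 then τ_k u_{1,ν}^{θ,λ} ≥ u_{1,ν}^{θ,λ} pointwise (Birkhoff property of the infimal minimizer). -/

import Mathlib

open scoped ENNReal Classical

/-- The canonical embedding of `ℤ³` into Euclidean `ℝ³`. -/
noncomputable def toR3 (x : ℤ × ℤ × ℤ) : EuclideanSpace ℝ (Fin 3) :=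
  (WithLp.equiv 2 (Fin 3 → ℝ)).symm ![(x.1 : ℝ), (x.2.1 : ℝ), (x.2.2 : ℝ)]

/-- The canonical embedding of `ℤ²` into Euclidean `ℝ²`. -/
noncomputable def toR2 (x : ℤ × ℤ) : EuclideanSpace ℝ (Fin 2) :=
  (WithLp.equiv 2 (Fin 2 → ℝ)).symm ![(x.1 : ℝ), (x.2 : ℝ)]

/-- Membership in the slab `ℤ²_M = ℤ² × {0,…,M}`. -/
def inSlab (M : ℕ) (x : ℤ × ℤ × ℤ) : Prop := 0 ≤ x.2.2 ∧ x.2.2 ≤ (M : ℤ)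

/-- The energy `E_M(u,Γ) = ∑_{x ∈ Γ_M} ∑_{y ∈ ℤ²_M} c(x-y)|u(x)-u(y)|`, valued in `[0,∞]`. -/
noncomputable def energyM (M : ℕ) (c : EuclideanSpace ℝ (Fin 3) → ℝ)
    (u : ℤ × ℤ × ℤ → ℝ) (Γ : Set (ℤ × ℤ)) : ℝ≥0∞ :=
  ∑' x : ℤ × ℤ × ℤ, ∑' y : ℤ × ℤ × ℤ,
    if (x.1, x.2.1) ∈ Γ ∧ inSlab M x ∧ inSlab M y then
      ENNReal.ofReal (c (toR3 x - toR3 y) * |u x - u y|) else 0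

/-- A direction `ν ∈ S¹` is rational if both its components are rational numbers. -/
def IsRationalDir (ν : EuclideanSpace ℝ (Fin 2)) : Prop :=
  ∃ a b : ℚ, ν 0 = (a : ℝ) ∧ ν 1 = (b : ℝ)

/-- The `ℤ`-module `ℤ_ν = {z ∈ ℤ² : ⟨z,ν⟩ = 0}`. -/
def Znu (ν : EuclideanSpace ℝ (Fin 2)) : Set (ℤ × ℤ) :=
  {z | @inner ℝ _ _ (toR2 z) ν = 0}

/-- The set `mℤ_ν` of `m`-fold multiples of elements of `ℤ_ν`. -/
def mZnu (m : ℕ) (ν : EuclideanSpace ℝ (Fin 2)) : Set (ℤ × ℤ) :=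
  {z | ∃ w ∈ Znu ν, z = ((m : ℤ) * w.1, (m : ℤ) * w.2)}

/-- `F` is a fundamental domain of `ℤ²/mℤ_ν`: every `z ∈ ℤ²` is uniquely `z₁ + z₂` with
`z₁ ∈ mℤ_ν` and `z₂ ∈ F`. -/
def IsFundDomain (m : ℕ) (ν : EuclideanSpace ℝ (Fin 2)) (F : Set (ℤ × ℤ)) : Prop :=
  ∀ z : ℤ × ℤ, ∃! w : ℤ × ℤ, w ∈ F ∧ z - w ∈ mZnu m ν

/-- `u : ℤ²_M → {±1}` is `(m,ν)`-periodic. -/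
def PeriodicMN (M m : ℕ) (ν : EuclideanSpace ℝ (Fin 2)) (u : ℤ × ℤ × ℤ → ℝ) : Prop :=
  ∀ x : ℤ × ℤ × ℤ, inSlab M x → ∀ z ∈ Znu ν,
    u (x.1 + (m : ℤ) * z.1, x.2.1 + (m : ℤ) * z.2, x.2.2) = u x

/-- The class `A_{m,ν}^{θ,λ}` of `(m,ν)`-periodic `{±1}`-configurations with `u = 1` below
level `θ` and `u = -1` above level `λ` (levels measured by `⟨P₂·,ν⟩`). -/
def AdmissibleA (M m : ℕ) (ν : EuclideanSpace ℝ (Fin 2)) (θ lam : ℝ)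
    (u : ℤ × ℤ × ℤ → ℝ) : Prop :=
  (∀ x, inSlab M x → u x = 1 ∨ u x = -1) ∧
  PeriodicMN M m ν u ∧
  (∀ x, inSlab M x → @inner ℝ _ _ (toR2 (x.1, x.2.1)) ν < θ → u x = 1) ∧
  (∀ x, inSlab M x → lam < @inner ℝ _ _ (toR2 (x.1, x.2.1)) ν → u x = -1)

/-- Membership in the class `M_{m,ν}^{θ,λ}` of minimizers of `E_M(·,F_{m,ν})` in
`A_{m,ν}^{θ,λ}`. -/
def IsMinA (M : ℕ) (c : EuclideanSpace ℝ (Fin 3) → ℝ) (m : ℕ)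
    (ν : EuclideanSpace ℝ (Fin 2)) (θ lam : ℝ) (F : Set (ℤ × ℤ))
    (u : ℤ × ℤ × ℤ → ℝ) : Prop :=
  AdmissibleA M m ν θ lam u ∧
  ∀ v, AdmissibleA M m ν θ lam v → energyM M c u F ≤ energyM M c v F

/-- `u` is the infimal minimizer `u_{m,ν}^{θ,λ}`: the pointwise least element (on the slab)
of the class of minimizers `M_{m,ν}^{θ,λ}`. -/
def IsInfMinA (M : ℕ) (c : EuclideanSpace ℝ (Fin 3) → ℝ) (m : ℕ)
    (ν : EuclideanSpace ℝ (Fin 2)) (θ lam : ℝ) (F : Set (ℤ × ℤ))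
    (u : ℤ × ℤ × ℤ → ℝ) : Prop :=
  IsMinA M c m ν θ lam F u ∧
  ∀ v, IsMinA M c m ν θ lam F v → ∀ x, inSlab M x → u x ≤ v x


section BirkhoffAux

lemma toR3_sub_shift (x y h : ℤ × ℤ × ℤ) : toR3 (x + h) - toR3 (y + h) = toR3 x - toR3 y := by
  ext i
  fin_cases i <;> simp [toR3, WithLp.equiv_symm_apply, PiLp.toLp_apply]

lemma toR2_add (a b : ℤ × ℤ) : toR2 (a + b) = toR2 a + toR2 b := by
  ext i
  fin_cases i <;> simp [toR2, WithLp.equiv_symm_apply, PiLp.toLp_apply]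

lemma toR2_neg (a : ℤ × ℤ) : toR2 (-a) = -toR2 a := by
  ext i
  fin_cases i <;> simp [toR2, WithLp.equiv_symm_apply, PiLp.toLp_apply]

lemma inSlab_shift (M : ℕ) (x : ℤ × ℤ × ℤ) (h : ℤ × ℤ) :
    inSlab M (x + (h.1, h.2, 0)) ↔ inSlab M x := by
  simp [inSlab]

lemma inSlab_sub_shift (M : ℕ) (x : ℤ × ℤ × ℤ) (h : ℤ × ℤ) :
    inSlab M (x - (h.1, h.2, 0)) ↔ inSlab M x := by
  simp [inSlab]

lemma mZnu_one (ν : EuclideanSpace ℝ (Fin 2)) : mZnu 1 ν = Znu ν := by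
  ext z
  constructor
  · rintro ⟨w, hw, rfl⟩
    simpa using hw
  · intro hz
    exact ⟨z, hz, by simp⟩

lemma Znu_neg {ν : EuclideanSpace ℝ (Fin 2)} {w : ℤ × ℤ} (hw : w ∈ Znu ν) : -w ∈ Znu ν := by
  simp only [Znu, Set.mem_setOf_eq, toR2_neg, inner_neg_left] at *
  simp [hw]

lemma periodic_shift {M : ℕ} {ν : EuclideanSpace ℝ (Fin 2)} {v : ℤ × ℤ × ℤ → ℝ}
    (hv : PeriodicMN M 1 ν v) {x : ℤ × ℤ × ℤ} (hx : inSlab M x) {w : ℤ × ℤ}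
    (hw : w ∈ Znu ν) : v (x + (w.1, w.2, 0)) = v x := by
  have e : x + ((w.1, w.2, 0) : ℤ × ℤ × ℤ)
      = (x.1 + ((1 : ℕ) : ℤ) * w.1, x.2.1 + ((1 : ℕ) : ℤ) * w.2, x.2.2) := by
    simp [Prod.ext_iff]
  rw [e, hv x hx w hw]

lemma submod_real (a b c d : ℝ) :
    |min a b - min c d| + |max a b - max c d| ≤ |a - c| + |b - d| := by
  rcases le_total a b with h1 | h1 <;> rcases le_total c d with h2 | h2 <;>
    simp only [min_eq_left, min_eq_right, max_eq_left, max_eq_right, h1, h2,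
      min_eq_left h1, min_eq_right h1, min_eq_left h2, min_eq_right h2,
      max_eq_right h1, max_eq_left h1, max_eq_right h2, max_eq_left h2] <;>
  [skip;
   (rcases abs_cases (a - c) with ⟨e1, f1⟩ | ⟨e1, f1⟩ <;>
    rcases abs_cases (b - d) with ⟨e2, f2⟩ | ⟨e2, f2⟩ <;>
    rcases abs_cases (a - d) with ⟨e3, f3⟩ | ⟨e3, f3⟩ <;>
    rcases abs_cases (b - c) with ⟨e4, f4⟩ | ⟨e4, f4⟩ <;> linarith);
   (rcases abs_cases (a - c) with ⟨e1, f1⟩ | ⟨e1, f1⟩ <;>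
    rcases abs_cases (b - d) with ⟨e2, f2⟩ | ⟨e2, f2⟩ <;>
    rcases abs_cases (a - d) with ⟨e3, f3⟩ | ⟨e3, f3⟩ <;>
    rcases abs_cases (b - c) with ⟨e4, f4⟩ | ⟨e4, f4⟩ <;> linarith);
   skip] <;>
  simp [add_comm]

lemma energy_translate (M : ℕ) (c : EuclideanSpace ℝ (Fin 3) → ℝ) (v : ℤ × ℤ × ℤ → ℝ)
    (Γ : Set (ℤ × ℤ)) (h : ℤ × ℤ) :
    energyM M c (fun x => v (x + (h.1, h.2, 0))) Γ
      = energyM M c v {z : ℤ × ℤ | z - h ∈ Γ} := by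
  unfold energyM
  rw [← Equiv.tsum_eq (Equiv.addRight ((h.1, h.2, 0) : ℤ × ℤ × ℤ))
      (fun x : ℤ × ℤ × ℤ => ∑' y : ℤ × ℤ × ℤ,
        if (x.1, x.2.1) ∈ {z : ℤ × ℤ | z - h ∈ Γ} ∧ inSlab M x ∧ inSlab M y then
          ENNReal.ofReal (c (toR3 x - toR3 y) * |v x - v y|) else 0)]
  refine tsum_congr fun x => ?_
  rw [← Equiv.tsum_eq (Equiv.addRight ((h.1, h.2, 0) : ℤ × ℤ × ℤ))
      (fun y : ℤ × ℤ × ℤ =>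
        if ((Equiv.addRight ((h.1, h.2, 0) : ℤ × ℤ × ℤ)) x |>.1,
            (Equiv.addRight ((h.1, h.2, 0) : ℤ × ℤ × ℤ)) x |>.2.1) ∈ {z : ℤ × ℤ | z - h ∈ Γ}
            ∧ inSlab M ((Equiv.addRight ((h.1, h.2, 0) : ℤ × ℤ × ℤ)) x) ∧ inSlab M y then
          ENNReal.ofReal (c (toR3 ((Equiv.addRight ((h.1, h.2, 0) : ℤ × ℤ × ℤ)) x) - toR3 y)
            * |v ((Equiv.addRight ((h.1, h.2, 0) : ℤ × ℤ × ℤ)) x) - v y|) else 0)]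
  refine tsum_congr fun y => ?_
  simp only [Equiv.coe_addRight]
  refine if_congr ?_ ?_ rfl
  · rw [inSlab_shift, inSlab_shift]
    constructor
    · rintro ⟨h1, h2, h3⟩
      refine ⟨?_, h2, h3⟩
      simpa [Prod.sub_def] using h1
    · rintro ⟨h1, h2, h3⟩
      refine ⟨?_, h2, h3⟩
      simpa [Prod.sub_def] using h1
  · rw [toR3_sub_shift]

/-- inner "conditional energy at x". -/
noncomputable def Hfun (M : ℕ) (c : EuclideanSpace ℝ (Fin 3) → ℝ) (v : ℤ × ℤ × ℤ → ℝ)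
    (x : ℤ × ℤ × ℤ) : ℝ≥0∞ :=
  ∑' y : ℤ × ℤ × ℤ, if inSlab M x ∧ inSlab M y then
    ENNReal.ofReal (c (toR3 x - toR3 y) * |v x - v y|) else 0

lemma energy_eq_H (M : ℕ) (c : EuclideanSpace ℝ (Fin 3) → ℝ) (v : ℤ × ℤ × ℤ → ℝ)
    (Γ : Set (ℤ × ℤ)) :
    energyM M c v Γ = ∑' x : ℤ × ℤ × ℤ, if (x.1, x.2.1) ∈ Γ then Hfun M c v x else 0 := by
  refine tsum_congr fun x => ?_
  by_cases hP : (x.1, x.2.1) ∈ Γ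
  · simp only [hP, if_true, Hfun]
    exact tsum_congr fun y => by simp [hP]
  · simp [hP]

lemma Hfun_shift {M : ℕ} {ν : EuclideanSpace ℝ (Fin 2)} (c : EuclideanSpace ℝ (Fin 3) → ℝ)
    {v : ℤ × ℤ × ℤ → ℝ} (hv : PeriodicMN M 1 ν v) (x : ℤ × ℤ × ℤ) {w : ℤ × ℤ}
    (hw : w ∈ Znu ν) : Hfun M c v (x + (w.1, w.2, 0)) = Hfun M c v x := by
  by_cases hx : inSlab M x
  · unfold Hfun
    rw [← Equiv.tsum_eq (Equiv.addRight ((w.1, w.2, 0) : ℤ × ℤ × ℤ))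
        (fun y : ℤ × ℤ × ℤ => if inSlab M (x + (w.1, w.2, 0)) ∧ inSlab M y then
          ENNReal.ofReal (c (toR3 (x + (w.1, w.2, 0)) - toR3 y)
            * |v (x + (w.1, w.2, 0)) - v y|) else 0)]
    refine tsum_congr fun y => ?_
    simp only [Equiv.coe_addRight]
    by_cases hy : inSlab M y
    · simp only [inSlab_shift, hx, hy, and_self, if_true]
      rw [toR3_sub_shift, periodic_shift hv hx hw, periodic_shift hv hy hw]
    · simp only [inSlab_shift, hy, and_false, if_false]
  · unfold Hfun
    rw [ENNReal.tsum_eq_zero.mpr, ENNReal.tsum_eq_zero.mpr]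
    · intro y
      simp [hx]
    · intro y
      rw [if_neg]
      exact fun hc => hx ((inSlab_shift M x w).mp hc.1)

lemma isFundDomain_shift {ν : EuclideanSpace ℝ (Fin 2)} {Γ : Set (ℤ × ℤ)}
    (hΓ : IsFundDomain 1 ν Γ) (h : ℤ × ℤ) : IsFundDomain 1 ν {z : ℤ × ℤ | z - h ∈ Γ} := by
  intro z
  obtain ⟨w, ⟨hw1, hw2⟩, huniq⟩ := hΓ (z - h)
  refine ⟨w + h, ⟨?_, ?_⟩, ?_⟩
  · show w + h - h ∈ Γ
    simpa using hw1
  · have e : z - (w + h) = z - h - w := by ring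
    rw [e]; exact hw2
  · rintro y ⟨hy1, hy2⟩
    have e : z - h - (y - h) = z - y := by ring
    have := huniq (y - h) ⟨hy1, by rw [e]; exact hy2⟩
    exact eq_add_of_sub_eq this

lemma energy_fund_invariant {M : ℕ} (c : EuclideanSpace ℝ (Fin 3) → ℝ)
    {ν : EuclideanSpace ℝ (Fin 2)} {v : ℤ × ℤ × ℤ → ℝ} (hv : PeriodicMN M 1 ν v)
    {Γ Γ' : Set (ℤ × ℤ)} (hΓ : IsFundDomain 1 ν Γ) (hΓ' : IsFundDomain 1 ν Γ') :
    energyM M c v Γ = energyM M c v Γ' := by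
  classical
  rw [energy_eq_H, energy_eq_H]
  have hmem : ∀ s : ℤ × ℤ, s ∈ mZnu 1 ν ↔ s ∈ Znu ν := fun s => by rw [mZnu_one]
  let φ : ℤ × ℤ → ℤ × ℤ := fun z => (hΓ' z).choose
  have hφ : ∀ z, φ z ∈ Γ' ∧ z - φ z ∈ Znu ν := by
    intro z
    have := (hΓ' z).choose_spec.1
    exact ⟨this.1, (hmem _).mp this.2⟩
  let ψ : ℤ × ℤ → ℤ × ℤ := fun z => (hΓ z).choose
  have hψ : ∀ z, ψ z ∈ Γ ∧ z - ψ z ∈ Znu ν := by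
    intro z
    have := (hΓ z).choose_spec.1
    exact ⟨this.1, (hmem _).mp this.2⟩
  have hψφ : ∀ z ∈ Γ, ψ (φ z) = z := by
    intro z hz
    have h1 : ψ (φ z) ∈ Γ ∧ φ z - ψ (φ z) ∈ mZnu 1 ν :=
      ⟨(hψ (φ z)).1, (hmem _).mpr (hψ (φ z)).2⟩
    have h2 : z ∈ Γ ∧ φ z - z ∈ mZnu 1 ν := by
      refine ⟨hz, (hmem _).mpr ?_⟩
      have := Znu_neg (hφ z).2
      simpa using this
    exact (hΓ (φ z)).unique h1 h2
  have hφψ : ∀ z ∈ Γ', φ (ψ z) = z := by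
    intro z hz
    have h1 : φ (ψ z) ∈ Γ' ∧ ψ z - φ (ψ z) ∈ mZnu 1 ν :=
      ⟨(hφ (ψ z)).1, (hmem _).mpr (hφ (ψ z)).2⟩
    have h2 : z ∈ Γ' ∧ ψ z - z ∈ mZnu 1 ν := by
      refine ⟨hz, (hmem _).mpr ?_⟩
      have := Znu_neg (hψ z).2
      simpa using this
    exact (hΓ' (ψ z)).unique h1 h2
  have lhs : (∑' x : ℤ × ℤ × ℤ, if (x.1, x.2.1) ∈ Γ then Hfun M c v x else 0)
      = ∑' x : ({x : ℤ × ℤ × ℤ | (x.1, x.2.1) ∈ Γ} : Set (ℤ × ℤ × ℤ)), Hfun M c v x := by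
    rw [tsum_subtype]
    exact tsum_congr fun x => by rw [Set.indicator_apply]; rfl
  have rhs : (∑' x : ℤ × ℤ × ℤ, if (x.1, x.2.1) ∈ Γ' then Hfun M c v x else 0)
      = ∑' x : ({x : ℤ × ℤ × ℤ | (x.1, x.2.1) ∈ Γ'} : Set (ℤ × ℤ × ℤ)), Hfun M c v x := by
    rw [tsum_subtype]
    exact tsum_congr fun x => by rw [Set.indicator_apply]; rfl
  rw [lhs, rhs]
  let e : ({x : ℤ × ℤ × ℤ | (x.1, x.2.1) ∈ Γ} : Set (ℤ × ℤ × ℤ)) ≃ ({x : ℤ × ℤ × ℤ | (x.1, x.2.1) ∈ Γ'} : Set (ℤ × ℤ × ℤ)) :=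
    { toFun := fun x => ⟨((φ (x.1.1, x.1.2.1)).1, (φ (x.1.1, x.1.2.1)).2, x.1.2.2), by
        simpa using (hφ (x.1.1, x.1.2.1)).1⟩
      invFun := fun x => ⟨((ψ (x.1.1, x.1.2.1)).1, (ψ (x.1.1, x.1.2.1)).2, x.1.2.2), by
        simpa using (hψ (x.1.1, x.1.2.1)).1⟩
      left_inv := by
        rintro ⟨⟨a, b, t⟩, hx⟩
        have := hψφ (a, b) hx
        simp only [Subtype.mk.injEq, Prod.ext_iff]
        simp only [Prod.mk.eta] at this ⊢
        rw [this]
        simp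
      right_inv := by
        rintro ⟨⟨a, b, t⟩, hx⟩
        have := hφψ (a, b) hx
        simp only [Subtype.mk.injEq, Prod.ext_iff]
        simp only [Prod.mk.eta] at this ⊢
        rw [this]
        simp }
  rw [← Equiv.tsum_eq e (fun x : ({x : ℤ × ℤ × ℤ | (x.1, x.2.1) ∈ Γ'} : Set (ℤ × ℤ × ℤ)) => Hfun M c v x)]
  refine tsum_congr fun x => ?_
  obtain ⟨⟨a, b, t⟩, hx⟩ := x
  show Hfun M c v (a, b, t) = Hfun M c v ((φ (a, b)).1, (φ (a, b)).2, t)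
  refine Eq.symm ?_
  have hw : φ (a, b) - (a, b) ∈ Znu ν := by
    have := Znu_neg (hφ (a, b)).2
    simpa using this
  have e2 : (((φ (a, b)).1, (φ (a, b)).2, t) : ℤ × ℤ × ℤ)
      = (a, b, t) + ((φ (a, b) - (a, b)).1, (φ (a, b) - (a, b)).2, 0) := by
    simp [Prod.ext_iff]
  rw [e2, Hfun_shift c hv _ hw]

end BirkhoffAux


/-- **Birkhoff property of the infimal minimizer** (Lemma A.6): for `k ∈ ℤ²`,
`τ_k u_{1,ν}^{θ,λ} ≤ u_{1,ν}^{θ,λ}` on the slab if `⟨k,ν⟩ ≤ 0`, and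
`τ_k u_{1,ν}^{θ,λ} ≥ u_{1,ν}^{θ,λ}` on the slab if `⟨k,ν⟩ ≥ 0`. -/
theorem infimal_minimizer_birkhoff
    (L Cbar c0 : ℝ) (hL : 0 < L) (hCbar : 0 < Cbar) (hc0 : 0 < c0)
    (c : EuclideanSpace ℝ (Fin 3) → ℝ)
    (hc_nonneg : ∀ z, 0 ≤ c z)
    (hc_bd : ∀ z, c z ≤ Cbar)
    (hc_range : ∀ z : EuclideanSpace ℝ (Fin 3), L ≤ ‖z‖ → c z = 0)
    (hc_coer : ∀ i : Fin 3,
      c0 ≤ c (EuclideanSpace.single i (1 : ℝ)) ∧ c0 ≤ c (-EuclideanSpace.single i (1 : ℝ)))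
    (M : ℕ)
    (ν : EuclideanSpace ℝ (Fin 2)) (hν : ‖ν‖ = 1) (hrat : IsRationalDir ν)
    (θ lam : ℝ) (hθlam : θ < lam)
    (F1 : Set (ℤ × ℤ)) (hF1 : IsFundDomain 1 ν F1)
    (u : ℤ × ℤ × ℤ → ℝ) (hu : IsInfMinA M c 1 ν θ lam F1 u)
    (k : ℤ × ℤ) :
    (@inner ℝ _ _ (toR2 k) ν ≤ 0 →
      ∀ x, inSlab M x → u (x - (k.1, k.2, 0)) ≤ u x) ∧
    (0 ≤ @inner ℝ _ _ (toR2 k) ν →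
      ∀ x, inSlab M x → u x ≤ u (x - (k.1, k.2, 0))) := by
  obtain ⟨⟨⟨hpm, hper, hbelow, habove⟩, hmin⟩, hinf⟩ := hu
  have key : ∀ p : ℤ × ℤ, 0 ≤ @inner ℝ _ _ (toR2 p) ν →
      ∀ x, inSlab M x → u x ≤ u (x - (p.1, p.2, 0)) := by
    intro p hp x hx
    -- inner product computations
    have hinner_sub : ∀ y : ℤ × ℤ × ℤ,
        @inner ℝ _ _ (toR2 ((y - ((p.1, p.2, 0) : ℤ × ℤ × ℤ)).1,
          (y - ((p.1, p.2, 0) : ℤ × ℤ × ℤ)).2.1)) ν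
        = @inner ℝ _ _ (toR2 (y.1, y.2.1)) ν - @inner ℝ _ _ (toR2 p) ν := by
      intro y
      have e : (((y - ((p.1, p.2, 0) : ℤ × ℤ × ℤ)).1,
          (y - ((p.1, p.2, 0) : ℤ × ℤ × ℤ)).2.1) : ℤ × ℤ) = (y.1, y.2.1) + (-p) := by
        simp [Prod.ext_iff, sub_eq_add_neg]
      rw [e, toR2_add, inner_add_left, toR2_neg, inner_neg_left]
      ring
    have hinner_add : ∀ y : ℤ × ℤ × ℤ,
        @inner ℝ _ _ (toR2 ((y + ((p.1, p.2, 0) : ℤ × ℤ × ℤ)).1,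
          (y + ((p.1, p.2, 0) : ℤ × ℤ × ℤ)).2.1)) ν
        = @inner ℝ _ _ (toR2 (y.1, y.2.1)) ν + @inner ℝ _ _ (toR2 p) ν := by
      intro y
      have e : (((y + ((p.1, p.2, 0) : ℤ × ℤ × ℤ)).1,
          (y + ((p.1, p.2, 0) : ℤ × ℤ × ℤ)).2.1) : ℤ × ℤ) = (y.1, y.2.1) + p := by
        simp [Prod.ext_iff]
      rw [e, toR2_add, inner_add_left]
    -- coordinate identities
    have ecoord_sub : ∀ (y : ℤ × ℤ × ℤ) (z : ℤ × ℤ),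
        ((y.1 + ((1 : ℕ) : ℤ) * z.1, y.2.1 + ((1 : ℕ) : ℤ) * z.2, y.2.2)
            - ((p.1, p.2, 0) : ℤ × ℤ × ℤ))
          = ((y - ((p.1, p.2, 0) : ℤ × ℤ × ℤ)).1 + ((1 : ℕ) : ℤ) * z.1,
            (y - ((p.1, p.2, 0) : ℤ × ℤ × ℤ)).2.1 + ((1 : ℕ) : ℤ) * z.2,
            (y - ((p.1, p.2, 0) : ℤ × ℤ × ℤ)).2.2) := by
      intro y z
      simp [Prod.ext_iff]
      omega
    have ecoord_add : ∀ (y : ℤ × ℤ × ℤ) (z : ℤ × ℤ),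
        ((y.1 + ((1 : ℕ) : ℤ) * z.1, y.2.1 + ((1 : ℕ) : ℤ) * z.2, y.2.2)
            + ((p.1, p.2, 0) : ℤ × ℤ × ℤ))
          = ((y + ((p.1, p.2, 0) : ℤ × ℤ × ℤ)).1 + ((1 : ℕ) : ℤ) * z.1,
            (y + ((p.1, p.2, 0) : ℤ × ℤ × ℤ)).2.1 + ((1 : ℕ) : ℤ) * z.2,
            (y + ((p.1, p.2, 0) : ℤ × ℤ × ℤ)).2.2) := by
      intro y z
      simp [Prod.ext_iff]
      omega
    have hcancel : ∀ y : ℤ × ℤ × ℤ,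
        y + ((p.1, p.2, 0) : ℤ × ℤ × ℤ) - ((p.1, p.2, 0) : ℤ × ℤ × ℤ) = y := fun y => by
      simp
    -- periodicity of the translate
    have hperτ : PeriodicMN M 1 ν (fun y => u (y - ((p.1, p.2, 0) : ℤ × ℤ × ℤ))) := by
      intro y hy z hz
      simp only []
      rw [ecoord_sub y z]
      exact hper (y - ((p.1, p.2, 0) : ℤ × ℤ × ℤ)) ((inSlab_sub_shift M y p).mpr hy) z hz
    have hper_min : PeriodicMN M 1 ν
        (fun y => min (u y) (u (y - ((p.1, p.2, 0) : ℤ × ℤ × ℤ)))) := by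
      intro y hy z hz
      simp only []
      rw [ecoord_sub y z, hper y hy z hz,
        hper (y - ((p.1, p.2, 0) : ℤ × ℤ × ℤ)) ((inSlab_sub_shift M y p).mpr hy) z hz]
    have hper_max : PeriodicMN M 1 ν
        (fun y => max (u y) (u (y - ((p.1, p.2, 0) : ℤ × ℤ × ℤ)))) := by
      intro y hy z hz
      simp only []
      rw [ecoord_sub y z, hper y hy z hz,
        hper (y - ((p.1, p.2, 0) : ℤ × ℤ × ℤ)) ((inSlab_sub_shift M y p).mpr hy) z hz]
    -- admissibility of the min
    have hadm_min : AdmissibleA M 1 ν θ lam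
        (fun y => min (u y) (u (y - ((p.1, p.2, 0) : ℤ × ℤ × ℤ)))) := by
      refine ⟨?_, hper_min, ?_, ?_⟩
      · intro y hy
        rcases hpm y hy with h1 | h1 <;>
          rcases hpm _ ((inSlab_sub_shift M y p).mpr hy) with h2 | h2 <;>
          simp only [h1, h2] <;> norm_num
      · intro y hy hlt
        have h1 := hbelow y hy hlt
        have h2 : u (y - ((p.1, p.2, 0) : ℤ × ℤ × ℤ)) = 1 := by
          apply hbelow _ ((inSlab_sub_shift M y p).mpr hy)
          rw [hinner_sub y]
          linarith
        simp only [h1, h2, min_self]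
      · intro y hy hgt
        have h1 := habove y hy hgt
        rcases hpm _ ((inSlab_sub_shift M y p).mpr hy) with h2 | h2 <;>
          simp only [h1, h2] <;> norm_num
    -- admissibility of the shifted max
    have hadm_q : AdmissibleA M 1 ν θ lam
        (fun y => max (u (y + ((p.1, p.2, 0) : ℤ × ℤ × ℤ))) (u y)) := by
      refine ⟨?_, ?_, ?_, ?_⟩
      · intro y hy
        rcases hpm _ ((inSlab_shift M y p).mpr hy) with h1 | h1 <;>
          rcases hpm y hy with h2 | h2 <;> simp only [h1, h2] <;> norm_num
      · intro y hy z hz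
        simp only []
        rw [ecoord_add y z, hper y hy z hz,
          hper (y + ((p.1, p.2, 0) : ℤ × ℤ × ℤ)) ((inSlab_shift M y p).mpr hy) z hz]
      · intro y hy hlt
        have h1 := hbelow y hy hlt
        rcases hpm _ ((inSlab_shift M y p).mpr hy) with h2 | h2 <;>
          simp only [h1, h2] <;> norm_num
      · intro y hy hgt
        have h1 := habove y hy hgt
        have h2 : u (y + ((p.1, p.2, 0) : ℤ × ℤ × ℤ)) = -1 := by
          apply habove _ ((inSlab_shift M y p).mpr hy)
          rw [hinner_add y]
          linarith
        simp only [h1, h2, max_self]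
    -- energy of the translate equals energy of u
    have hEτ : energyM M c (fun y => u (y - ((p.1, p.2, 0) : ℤ × ℤ × ℤ))) F1
        = energyM M c u F1 := by
      have e : (fun y : ℤ × ℤ × ℤ => u (y - ((p.1, p.2, 0) : ℤ × ℤ × ℤ)))
          = fun y => u (y + (((-p).1, (-p).2, 0) : ℤ × ℤ × ℤ)) := by
        funext y
        congr 1
        try simp [Prod.ext_iff, sub_eq_add_neg]
      rw [e, energy_translate]
      exact energy_fund_invariant c hper (isFundDomain_shift hF1 (-p)) hF1
    -- energy of shifted max equals energy of max
    have hEmax : energyM M c (fun y => max (u (y + ((p.1, p.2, 0) : ℤ × ℤ × ℤ))) (u y)) F1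
        = energyM M c (fun y => max (u y) (u (y - ((p.1, p.2, 0) : ℤ × ℤ × ℤ)))) F1 := by
      have e : (fun y : ℤ × ℤ × ℤ => max (u (y + ((p.1, p.2, 0) : ℤ × ℤ × ℤ))) (u y))
          = fun y => (fun w : ℤ × ℤ × ℤ => max (u w) (u (w - ((p.1, p.2, 0) : ℤ × ℤ × ℤ))))
              (y + ((p.1, p.2, 0) : ℤ × ℤ × ℤ)) := by
        funext y
        simp only []
        rw [hcancel y]
      rw [e, energy_translate M c
        (fun w : ℤ × ℤ × ℤ => max (u w) (u (w - ((p.1, p.2, 0) : ℤ × ℤ × ℤ)))) F1 p]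
      exact energy_fund_invariant c hper_max (isFundDomain_shift hF1 p) hF1
    have hEuq : energyM M c u F1
        ≤ energyM M c (fun y => max (u y) (u (y - ((p.1, p.2, 0) : ℤ × ℤ × ℤ)))) F1 := by
      rw [← hEmax]
      exact hmin _ hadm_q
    -- submodularity
    have hsub : energyM M c (fun y => min (u y) (u (y - ((p.1, p.2, 0) : ℤ × ℤ × ℤ)))) F1
          + energyM M c (fun y => max (u y) (u (y - ((p.1, p.2, 0) : ℤ × ℤ × ℤ)))) F1
        ≤ energyM M c u F1
          + energyM M c (fun y => u (y - ((p.1, p.2, 0) : ℤ × ℤ × ℤ))) F1 := by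
      unfold energyM
      rw [← ENNReal.tsum_add, ← ENNReal.tsum_add]
      refine ENNReal.tsum_le_tsum fun x' => ?_
      rw [← ENNReal.tsum_add, ← ENNReal.tsum_add]
      refine ENNReal.tsum_le_tsum fun y' => ?_
      by_cases hcond : (x'.1, x'.2.1) ∈ F1 ∧ inSlab M x' ∧ inSlab M y'
      · simp only [if_pos hcond]
        rw [← ENNReal.ofReal_add (mul_nonneg (hc_nonneg _) (abs_nonneg _))
            (mul_nonneg (hc_nonneg _) (abs_nonneg _)),
          ← ENNReal.ofReal_add (mul_nonneg (hc_nonneg _) (abs_nonneg _))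
            (mul_nonneg (hc_nonneg _) (abs_nonneg _)),
          ← mul_add, ← mul_add]
        exact ENNReal.ofReal_le_ofReal
          (mul_le_mul_of_nonneg_left (submod_real _ _ _ _) (hc_nonneg _))
      · simp [hcond]
    -- conclude min is a minimizer
    have hEw_le : energyM M c (fun y => min (u y) (u (y - ((p.1, p.2, 0) : ℤ × ℤ × ℤ)))) F1
        ≤ energyM M c u F1 := by
      by_cases htop : energyM M c u F1 = ⊤
      · rw [htop]
        exact le_top
      · have h1 : energyM M c (fun y => min (u y) (u (y - ((p.1, p.2, 0) : ℤ × ℤ × ℤ)))) F1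
              + energyM M c u F1
            ≤ energyM M c u F1 + energyM M c u F1 := by
          calc energyM M c (fun y => min (u y) (u (y - ((p.1, p.2, 0) : ℤ × ℤ × ℤ)))) F1
                + energyM M c u F1
              ≤ energyM M c (fun y => min (u y) (u (y - ((p.1, p.2, 0) : ℤ × ℤ × ℤ)))) F1
                + energyM M c (fun y => max (u y) (u (y - ((p.1, p.2, 0) : ℤ × ℤ × ℤ)))) F1 :=
                add_le_add_right hEuq _
            _ ≤ energyM M c u F1
                + energyM M c (fun y => u (y - ((p.1, p.2, 0) : ℤ × ℤ × ℤ))) F1 := hsub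
            _ = energyM M c u F1 + energyM M c u F1 := by rw [hEτ]
        exact (ENNReal.add_le_add_iff_right htop).mp h1
    have hminA : IsMinA M c 1 ν θ lam F1
        (fun y => min (u y) (u (y - ((p.1, p.2, 0) : ℤ × ℤ × ℤ)))) :=
      ⟨hadm_min, fun v hv => hEw_le.trans (hmin v hv)⟩
    have := hinf _ hminA x hx
    exact this.trans (min_le_right _ _)
  refine ⟨?_, key k⟩
  intro hkle x hx
  have h2 : 0 ≤ @inner ℝ _ _ (toR2 (-k)) ν := by
    rw [toR2_neg, inner_neg_left]
    linarith
  have hx' : inSlab M (x - ((k.1, k.2, 0) : ℤ × ℤ × ℤ)) := (inSlab_sub_shift M x k).mpr hx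
  have h3 := key (-k) h2 (x - ((k.1, k.2, 0) : ℤ × ℤ × ℤ)) hx'
  have e : (x - ((k.1, k.2, 0) : ℤ × ℤ × ℤ)) - (((-k).1, (-k).2, 0) : ℤ × ℤ × ℤ) = x := by
    simp [Prod.ext_iff]
  rw [e] at h3
  exact h3
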